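/- Let x, y : [0,∞) → [0,∞) be measurable with x differentiable, and let φ : [0,∞) → [0,∞) be bounded with φ(t) → 0 as t → ∞. Assume x'(t) + y(t) ≤ φ(t)(x(t) + 1) and x(t) ≤ C y(t) for all t ≥ 0, and x(0) ≤ C, for some C > 0. Then x is bounded on [0,∞) and x(t) → 0 as t → ∞. -/

import Mathlib

open MeasureTheory Filter Topology

/-- Core decay estimate: once `φ ≤ ε` on `[T, ∞)` with `ε ≤ 1/(2C)`, then
`x t ≤ x T * exp(-(1/C - ε)(t-T)) + ε/(1/C - ε)` for `t ≥ T`. -/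
lemma stmt3_aux (x x' y φ : ℝ → ℝ) (C : ℝ) (hC : 0 < C)
    (hxnonneg : ∀ t, 0 ≤ t → 0 ≤ x t)
    (hderiv : ∀ t, 0 ≤ t → HasDerivAt x (x' t) t)
    (hineq : ∀ t, 0 ≤ t → x' t + y t ≤ φ t * (x t + 1))
    (hcomp : ∀ t, 0 ≤ t → x t ≤ C * y t)
    (T ε : ℝ) (hT : 0 ≤ T) (hε : 0 < ε) (hεle : ε ≤ 1 / (2 * C))
    (hφ : ∀ t, T ≤ t → φ t ≤ ε) :
    ∀ t, T ≤ t → x t ≤ x T * Real.exp (-(1 / C - ε) * (t - T)) + ε / (1 / C - ε) := by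
  set k : ℝ := 1 / C - ε with hkdef
  have hhalf : (1 : ℝ) / (2 * C) < 1 / C := by
    rw [div_lt_div_iff₀ (by positivity) hC]; nlinarith
  have hkpos : 0 < k := by
    have : ε < 1 / C := lt_of_le_of_lt hεle hhalf
    simp only [hkdef]; linarith
  set h : ℝ → ℝ := fun t => (x t - ε / k) * Real.exp (k * t) with hhdef
  have hderivh : ∀ t, 0 ≤ t →
      HasDerivAt h ((x' t + k * x t - ε) * Real.exp (k * t)) t := by
    intro t ht
    have h1 : HasDerivAt (fun s => x s - ε / k) (x' t) t := (hderiv t ht).sub_const _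
    have h2 : HasDerivAt (fun s : ℝ => Real.exp (k * s)) (Real.exp (k * t) * k) t := by
      have := ((hasDerivAt_id t).const_mul k).exp
      simpa using this
    have := h1.mul h2
    refine this.congr_deriv ?_
    have hk : ε / k * k = ε := div_mul_cancel₀ ε hkpos.ne'
    linear_combination (-Real.exp (k * t)) * hk
  have hkey : ∀ t, T ≤ t → x' t + k * x t - ε ≤ 0 := by
    intro t ht
    have ht0 : 0 ≤ t := le_trans hT ht
    have hy : x t / C ≤ y t := (div_le_iff₀' hC).mpr (hcomp t ht0)
    have h1 : x' t + y t ≤ φ t * (x t + 1) := hineq t ht0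
    have h2 : φ t * (x t + 1) ≤ ε * (x t + 1) :=
      mul_le_mul_of_nonneg_right (hφ t ht) (by linarith [hxnonneg t ht0])
    have h3 : (1 / C) * x t = x t / C := by ring
    simp only [hkdef]
    nlinarith
  have hmono : AntitoneOn h (Set.Ici T) := by
    apply antitoneOn_of_deriv_nonpos (convex_Ici T)
    · exact fun t ht => ((hderivh t (le_trans hT ht)).continuousAt).continuousWithinAt
    · intro t ht
      rw [interior_Ici] at ht
      exact ((hderivh t (le_trans hT (le_of_lt ht))).differentiableAt).differentiableWithinAt
    · intro t ht
      rw [interior_Ici] at ht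
      have ht0 : 0 ≤ t := le_trans hT (le_of_lt ht)
      rw [(hderivh t ht0).deriv]
      exact mul_nonpos_of_nonpos_of_nonneg (hkey t (le_of_lt ht)) (Real.exp_nonneg _)
  intro t ht
  have h1 : h t ≤ h T := hmono (Set.mem_Ici.mpr le_rfl) (Set.mem_Ici.mpr ht) ht
  simp only [hhdef] at h1
  have hEpos : 0 < Real.exp (k * t) := Real.exp_pos _
  have hexp : Real.exp (-k * (t - T)) = Real.exp (k * T) / Real.exp (k * t) := by
    rw [← Real.exp_sub]; ring_nf
  have h2 : x t - ε / k ≤ (x T - ε / k) * Real.exp (-k * (t - T)) := by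
    rw [hexp, ← mul_div_assoc, le_div_iff₀ hEpos]
    exact h1
  have h3 : (x T - ε / k) * Real.exp (-k * (t - T)) ≤ x T * Real.exp (-k * (t - T)) := by
    apply mul_le_mul_of_nonneg_right _ (Real.exp_nonneg _)
    have : 0 ≤ ε / k := le_of_lt (div_pos hε hkpos)
    linarith
  have : x t ≤ x T * Real.exp (-k * (t - T)) + ε / k := by linarith
  simpa [hkdef] using this

/-- Lemma A.2 (first part): if `x' + y ≤ φ(t)(x + 1)` with `φ` bounded and tending to zero,
`x ≤ C y`, and `x(0) ≤ C`, then `x` is bounded and tends to `0` at infinity. -/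
theorem stmt3 (x x' y φ : ℝ → ℝ) (C : ℝ) (hC : 0 < C)
    (hxnonneg : ∀ t, 0 ≤ t → 0 ≤ x t)
    (hynonneg : ∀ t, 0 ≤ t → 0 ≤ y t)
    (hymeas : Measurable y)
    (hφnonneg : ∀ t, 0 ≤ t → 0 ≤ φ t)
    (hφbdd : ∀ t, 0 ≤ t → φ t ≤ C)
    (hφlim : Tendsto φ atTop (𝓝 0))
    (hderiv : ∀ t, 0 ≤ t → HasDerivAt x (x' t) t)
    (hineq : ∀ t, 0 ≤ t → x' t + y t ≤ φ t * (x t + 1))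
    (hcomp : ∀ t, 0 ≤ t → x t ≤ C * y t)
    (hx0 : x 0 ≤ C) :
    (∃ M : ℝ, ∀ t, 0 ≤ t → x t ≤ M) ∧ Tendsto x atTop (𝓝 0) := by
  set ε₀ : ℝ := 1 / (2 * C) with hε₀def
  have hε₀pos : 0 < ε₀ := by positivity
  have hk₀pos : 0 < 1 / C - ε₀ := by
    rw [hε₀def, sub_pos, div_lt_div_iff₀ (by positivity) hC]; nlinarith
  -- find T where φ ≤ ε₀
  obtain ⟨T₁, hT₁⟩ := eventually_atTop.mp (hφlim.eventually_lt_const hε₀pos)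
  set T : ℝ := max T₁ 0 with hTdef
  have hT0 : 0 ≤ T := le_max_right _ _
  have hφT : ∀ t, T ≤ t → φ t ≤ ε₀ := fun t ht =>
    (hT₁ t (le_trans (le_max_left _ _) ht)).le
  -- bound x on [0, T]
  have hcont : ContinuousOn x (Set.Icc 0 T) := fun t ht =>
    ((hderiv t ht.1).continuousAt).continuousWithinAt
  obtain ⟨M₁, hM₁⟩ := (isCompact_Icc).exists_bound_of_continuousOn hcont
  have hdecay := stmt3_aux x x' y φ C hC hxnonneg hderiv hineq hcomp T ε₀ hT0 hε₀pos
    le_rfl hφT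
  have hxT : x T ≤ M₁ := by
    have := hM₁ T ⟨hT0, le_rfl⟩
    calc x T ≤ |x T| := le_abs_self _
      _ ≤ M₁ := this
  set M : ℝ := M₁ + ε₀ / (1 / C - ε₀) with hMdef
  have hxM : ∀ t, 0 ≤ t → x t ≤ M := by
    intro t ht
    rcases le_total t T with h | h
    · have := hM₁ t ⟨ht, h⟩
      have h2 : 0 ≤ ε₀ / (1 / C - ε₀) := le_of_lt (div_pos hε₀pos hk₀pos)
      calc x t ≤ |x t| := le_abs_self _
        _ ≤ M₁ := this
        _ ≤ M := by simp only [hMdef]; linarith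
    · have h1 := hdecay t h
      have h2 : Real.exp (-(1 / C - ε₀) * (t - T)) ≤ 1 := by
        rw [Real.exp_le_one_iff]
        nlinarith
      have h3 : x T * Real.exp (-(1 / C - ε₀) * (t - T)) ≤ x T := by
        nlinarith [hxnonneg T hT0, Real.exp_nonneg (-(1 / C - ε₀) * (t - T))]
      simp only [hMdef]
      linarith
  refine ⟨⟨M, hxM⟩, ?_⟩
  have hM0 : 0 ≤ M := le_trans (hxnonneg 0 le_rfl) (hxM 0 le_rfl)
  rw [Metric.tendsto_atTop]
  intro ε' hε'
  set ε : ℝ := min ε₀ (ε' / (4 * C)) with hεdef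
  have hεpos : 0 < ε := lt_min hε₀pos (by positivity)
  have hεle : ε ≤ ε₀ := min_le_left _ _
  obtain ⟨T₂', hT₂'⟩ := eventually_atTop.mp (hφlim.eventually_lt_const hεpos)
  set T₂ : ℝ := max T₂' T with hT₂def
  have hT₂0 : 0 ≤ T₂ := le_trans hT0 (le_max_right _ _)
  have hφT₂ : ∀ t, T₂ ≤ t → φ t ≤ ε := fun t ht =>
    (hT₂' t (le_trans (le_max_left _ _) ht)).le
  set k : ℝ := 1 / C - ε with hkdef
  have hkge : 1 / (2 * C) ≤ k := by
    have : ε ≤ 1 / (2 * C) := hεle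
    have h2 : 1 / C = 2 * (1 / (2 * C)) := by field_simp
    simp only [hkdef]; linarith
  have hkpos : 0 < k := lt_of_lt_of_le (by positivity) hkge
  have hdecay2 := stmt3_aux x x' y φ C hC hxnonneg hderiv hineq hcomp T₂ ε hT₂0 hεpos
    hεle hφT₂
  have hεk : ε / k ≤ ε' / 2 := by
    rw [div_le_div_iff₀ hkpos two_pos]
    have h4C : ε * (4 * C) ≤ ε' := by
      rw [← le_div_iff₀ (by positivity)]; exact min_le_right _ _
    have h2C : 1 ≤ k * (2 * C) := by
      rw [← div_le_iff₀ (by positivity)]; exact hkge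
    have h5 : ε * (4 * C) ≤ ε' * (k * (2 * C)) :=
      le_trans h4C (le_mul_of_one_le_right hε'.le h2C)
    nlinarith [h5, hC]
  have htM : Tendsto (fun t => M * Real.exp (-k * (t - T₂))) atTop (𝓝 0) := by
    have h1 : Tendsto (fun t : ℝ => -k * (t - T₂)) atTop atBot := by
      apply Tendsto.const_mul_atTop_of_neg (neg_lt_zero.mpr hkpos)
      exact tendsto_atTop_add_const_right atTop (-T₂) tendsto_id
    have h2 := (Real.tendsto_exp_atBot.comp h1).const_mul M
    simpa using h2
  obtain ⟨N, hN⟩ := eventually_atTop.mp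
    (htM.eventually_lt_const (show (0:ℝ) < ε' / 2 by linarith))
  refine ⟨max N T₂, fun t ht => ?_⟩
  have htT₂ : T₂ ≤ t := le_trans (le_max_right _ _) ht
  have ht0 : 0 ≤ t := le_trans hT₂0 htT₂
  rw [Real.dist_eq, sub_zero, abs_of_nonneg (hxnonneg t ht0)]
  have h1 := hdecay2 t htT₂
  have h2 : x T₂ * Real.exp (-k * (t - T₂)) ≤ M * Real.exp (-k * (t - T₂)) :=
    mul_le_mul_of_nonneg_right (hxM T₂ hT₂0) (Real.exp_nonneg _)
  have h3 := hN t (le_trans (le_max_left _ _) ht)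
  simp only [hkdef] at h1 h3 ⊢
  calc x t ≤ x T₂ * Real.exp (-(1 / C - ε) * (t - T₂)) + ε / (1 / C - ε) := h1
    _ ≤ M * Real.exp (-(1 / C - ε) * (t - T₂)) + ε' / 2 := by
        have := h2; simp only [hkdef] at this; linarith [hεk]
    _ < ε' / 2 + ε' / 2 := by linarith [h3]
    _ = ε' := by ring
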